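/- arXiv:1308.1796 — 4 statements merged into one kernel-verified Lean document; each statement's English description precedes it below -/
import Mathlib

section
/- Assume there are constants N, M > 0 such that |b(t,x)| ≤ N(1 + |x|^{l+1}) and |σ(t,x)|² ≤ M(1 + |x|^{l+2}) for all t ∈ [0,T] and x ∈ ℝ^d. Then there exists a constant C > 0, depending only on N, M and l, such that for every n ≥ 1, t ∈ [0,T] and x ∈ ℝ^d, the Model 2 tamed coefficients satisfy |b_n(t,x)| ≤ min(C n^α (1+|x|), |b(t,x)|) and |σ_n(t,x)|² ≤ min(C n^α (1+|x|²), |σ(t,x)|²), i.e. condition (B-2) holds for Model 2. -/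
/-- Euclidean space ℝ^d. -/
abbrev Vec (d : ℕ) := EuclideanSpace ℝ (Fin d)

/-- d × d₁ matrices with the Hilbert–Schmidt (Frobenius) norm. -/
abbrev Mat (d d₁ : ℕ) := EuclideanSpace ℝ (Fin d × Fin d₁)

/-- under polynomial growth of the coefficients, the Model 2 tamed
coefficients satisfy condition (B-2). -/
theorem stmt_7 (d d₁ : ℕ) (hd : 1 ≤ d) (hd₁ : 1 ≤ d₁) (T : ℝ) (hT : 0 < T)
    (l : ℝ) (hl : 0 < l)
    (b : ℝ → Vec d → Vec d) (σ : ℝ → Vec d → Mat d d₁)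
    (N M : ℝ) (hN : 0 < N) (hM : 0 < M)
    (hb : ∀ t ∈ Set.Icc (0 : ℝ) T, ∀ x : Vec d, ‖b t x‖ ≤ N * (1 + ‖x‖ ^ (l + 1)))
    (hσ : ∀ t ∈ Set.Icc (0 : ℝ) T, ∀ x : Vec d, ‖σ t x‖ ^ 2 ≤ M * (1 + ‖x‖ ^ (l + 2)))
    (α : ℝ) (hα : 0 < α) (hα' : α ≤ 1 / 2)
    (bn : ℕ → ℝ → Vec d → Vec d) (σn : ℕ → ℝ → Vec d → Mat d d₁)
    (hbn : ∀ n : ℕ, 1 ≤ n → ∀ t : ℝ, ∀ x : Vec d,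
      bn n t x = (1 + (n : ℝ) ^ (-α) * ‖x‖ ^ l)⁻¹ • b t x)
    (hσn : ∀ n : ℕ, 1 ≤ n → ∀ t : ℝ, ∀ x : Vec d,
      σn n t x = (1 + (n : ℝ) ^ (-α) * ‖x‖ ^ l)⁻¹ • σ t x) :
    ∃ C : ℝ, 0 < C ∧ ∀ n : ℕ, 1 ≤ n → ∀ t ∈ Set.Icc (0 : ℝ) T, ∀ x : Vec d,
      ‖bn n t x‖ ≤ min (C * (n : ℝ) ^ α * (1 + ‖x‖)) ‖b t x‖ ∧
      ‖σn n t x‖ ^ 2 ≤ min (C * (n : ℝ) ^ α * (1 + ‖x‖ ^ 2)) (‖σ t x‖ ^ 2) := by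
  refine ⟨max N M, lt_max_of_lt_left hN, ?_⟩
  intro n hn t ht x
  have hr0 : (0:ℝ) ≤ ‖x‖ := norm_nonneg x
  set r : ℝ := ‖x‖ with hr
  have hn1 : (1:ℝ) ≤ (n:ℝ) := by exact_mod_cast hn
  have hc1 : (1:ℝ) ≤ (n:ℝ) ^ α := Real.one_le_rpow hn1 hα.le
  have hc0 : (0:ℝ) < (n:ℝ) ^ α := lt_of_lt_of_le one_pos hc1
  have hna : (n:ℝ) ^ (-α) = ((n:ℝ) ^ α)⁻¹ := by
    rw [Real.rpow_neg (by linarith : (0:ℝ) ≤ (n:ℝ))]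
  set c := (n:ℝ) ^ α with hcdef
  set a := c⁻¹ * r ^ l with ha
  have hrl0 : (0:ℝ) ≤ r ^ l := Real.rpow_nonneg hr0 l
  have ha0 : 0 ≤ a := by positivity
  have hca : c * a = r ^ l := by
    rw [ha]; field_simp
  have h1a0 : (0:ℝ) < 1 + a := by linarith
  have hrl1 : r ^ (l+1) = r ^ l * r := by
    rw [Real.rpow_add' hr0 (by linarith), Real.rpow_one]
  have hrl2 : r ^ (l+2) = r ^ l * r ^ 2 := by
    rw [Real.rpow_add' hr0 (by linarith), Real.rpow_two]
  have hCN : N ≤ max N M := le_max_left _ _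
  have hCM : M ≤ max N M := le_max_right _ _
  have hbx := hb t ht x
  have hσx := hσ t ht x
  have hb0 : (0:ℝ) ≤ ‖b t x‖ := norm_nonneg _
  have hσ0 : (0:ℝ) ≤ ‖σ t x‖ := norm_nonneg _
  have hbneq : ‖bn n t x‖ = (1+a)⁻¹ * ‖b t x‖ := by
    rw [hbn n hn t x, norm_smul, Real.norm_eq_abs, hna,
      abs_of_nonneg (by positivity)]
  have hσneq : ‖σn n t x‖ = (1+a)⁻¹ * ‖σ t x‖ := by
    rw [hσn n hn t x, norm_smul, Real.norm_eq_abs, hna,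
      abs_of_nonneg (by positivity)]
  have hinv1 : (1+a)⁻¹ ≤ 1 := by
    rw [inv_le_one_iff₀]; right; linarith
  have hinv0 : (0:ℝ) ≤ (1+a)⁻¹ := by positivity
  set C := max N M with hC
  have hC0 : (0:ℝ) < C := lt_max_of_lt_left hN
  constructor
  · rw [le_min_iff]
    constructor
    · rw [hbneq, inv_mul_le_iff₀ h1a0]
      have h1 : (1+a) * (C * c * (1 + r)) = C * (c + r^l + c*r + r^l*r) := by
        rw [← hca]; ring
      have p1 : 0 ≤ c * r := mul_nonneg hc0.le hr0
      have p2 : 0 ≤ r^l * r := mul_nonneg hrl0 hr0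
      have hB : 1 + r^l*r ≤ c + r^l + c*r + r^l*r := by linarith
      calc ‖b t x‖ ≤ N * (1 + r ^ (l+1)) := hbx
        _ = N * (1 + r^l*r) := by rw [hrl1]
        _ ≤ C * (c + r^l + c*r + r^l*r) :=
            mul_le_mul hCN hB (by linarith) hC0.le
        _ = (1+a) * (C * c * (1 + r)) := h1.symm
    · rw [hbneq]
      calc (1+a)⁻¹ * ‖b t x‖ ≤ 1 * ‖b t x‖ :=
            mul_le_mul_of_nonneg_right hinv1 hb0
        _ = ‖b t x‖ := one_mul _
  · rw [le_min_iff]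
    constructor
    · rw [hσneq, mul_pow, inv_pow, inv_mul_le_iff₀ (by positivity)]
      have h2 : (1+a)^2 * (C * c * (1 + r^2))
          = C * (c + 2*(r^l) + r^l*a + c*r^2 + 2*(r^l*r^2) + r^l*a*r^2) := by
        rw [← hca]; ring
      have p1 : 0 ≤ r^l*a := mul_nonneg hrl0 ha0
      have p2 : 0 ≤ c*r^2 := mul_nonneg hc0.le (sq_nonneg r)
      have p3 : 0 ≤ r^l*r^2 := mul_nonneg hrl0 (sq_nonneg r)
      have p4 : 0 ≤ r^l*a*r^2 := mul_nonneg p1 (sq_nonneg r)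
      have hB : 1 + r^l*r^2 ≤ c + 2*(r^l) + r^l*a + c*r^2 + 2*(r^l*r^2) + r^l*a*r^2 := by
        linarith
      calc ‖σ t x‖ ^ 2 ≤ M * (1 + r ^ (l+2)) := hσx
        _ = M * (1 + r^l*r^2) := by rw [hrl2]
        _ ≤ C * (c + 2*(r^l) + r^l*a + c*r^2 + 2*(r^l*r^2) + r^l*a*r^2) :=
            mul_le_mul hCM hB (by linarith) hC0.le
        _ = (1+a)^2 * (C * c * (1 + r^2)) := h2.symm
    · rw [hσneq, mul_pow]
      have h1 : ((1+a)⁻¹)^2 ≤ 1 := pow_le_one₀ hinv0 hinv1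
      calc ((1+a)⁻¹)^2 * ‖σ t x‖^2 ≤ 1 * ‖σ t x‖^2 :=
            mul_le_mul_of_nonneg_right h1 (sq_nonneg _)
        _ = ‖σ t x‖^2 := one_mul _
end

section
/- Assume condition (A-6): there are constants p₁ ≥ 2 and l, L > 0 such that for all t ∈ [0,T] and x, y ∈ ℝ^d, 2(x−y)·(b(t,x)−b(t,y)) + (p₁−1)|σ(t,x)−σ(t,y)|² ≤ L|x−y|² and |b(t,x)−b(t,y)| ≤ L(1+|x|^l+|y|^l)|x−y|. Let p satisfy 2 ≤ p < p₁ and let b_n : [0,T] × ℝ^d → ℝ^d and σ_n : [0,T] × ℝ^d → ℝ^{d×d₁} be arbitrary functions. Then there exists a constant C > 0, depending only on p, p₁, l and L, such that for all t ∈ [0,T] and x, y, z ∈ ℝ^d: 2(x−y)·(b(t,x) − b_n(t,z)) + (p−1)|σ(t,x) − σ_n(t,z)|² ≤ C|x−y|² + C(1 + |y|^{2l} + |z|^{2l})|y−z|² + |b(t,z) − b_n(t,z)|² + C|σ(t,z) − σ_n(t,z)|². -/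
open scoped RealInnerProductSpace

private lemma young_ineq {E : Type*} [NormedAddCommGroup E] [InnerProductSpace ℝ E]
    (a b : E) (δ : ℝ) (hδ : 0 < δ) :
    ‖a + b‖ ^ 2 ≤ (1 + δ) * ‖a‖ ^ 2 + (1 + δ⁻¹) * ‖b‖ ^ 2 := by
  have h := norm_add_sq_real a b
  have cs := real_inner_le_norm a b
  have h1 : δ * δ⁻¹ = 1 := mul_inv_cancel₀ hδ.ne'
  have hinv : 0 < δ⁻¹ := inv_pos.mpr hδ
  nlinarith [sq_nonneg (δ * ‖a‖ - ‖b‖), norm_nonneg a, norm_nonneg b,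
    mul_nonneg (norm_nonneg a) (norm_nonneg b)]

private lemma rpow_le_one_add' {a l : ℝ} (ha : 0 ≤ a) (hl : 0 < l) :
    a ^ l ≤ 1 + a ^ (2 * l) := by
  rcases le_or_gt a 1 with h | h
  · have h1 := Real.rpow_le_one ha h hl.le
    have h2 := Real.rpow_nonneg ha (2 * l)
    linarith
  · have h1 : a ^ l ≤ a ^ (2 * l) :=
      Real.rpow_le_rpow_of_exponent_le h.le (by linarith)
    linarith

private lemma rpow_sq' {a l : ℝ} (ha : 0 ≤ a) : (a ^ l) ^ 2 = a ^ (2 * l) := by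
  rw [mul_comm, Real.rpow_mul ha, ← Real.rpow_natCast (a ^ l) 2]
  norm_num

private lemma aux_two_mul {I u w : ℝ} (h : I ≤ u * w) : 2 * I ≤ u ^ 2 + w ^ 2 := by
  nlinarith [sq_nonneg (u - w)]

private lemma aux_sq3 (a b : ℝ) : (1 + a + b) ^ 2 ≤ 3 * (1 + a ^ 2 + b ^ 2) := by
  nlinarith [sq_nonneg (a - b), sq_nonneg (1 - a), sq_nonneg (1 - b)]

set_option maxHeartbeats 1600000 in

/-- under (A-6) and `2 ≤ p < p₁`, the key one-step estimate used in
the rate-of-convergence proof holds with a constant depending only on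
`p, p₁, l, L`. -/
theorem stmt_11 (d d₁ : ℕ) (hd : 1 ≤ d) (hd₁ : 1 ≤ d₁) (T : ℝ) (hT : 0 < T)
    (b : ℝ → Vec d → Vec d) (σ : ℝ → Vec d → Mat d d₁)
    (p₁ l L : ℝ) (hp₁ : 2 ≤ p₁) (hl : 0 < l) (hL : 0 < L)
    (hMono : ∀ t ∈ Set.Icc (0 : ℝ) T, ∀ x y : Vec d,
      2 * ⟪x - y, b t x - b t y⟫ + (p₁ - 1) * ‖σ t x - σ t y‖ ^ 2 ≤ L * ‖x - y‖ ^ 2)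
    (hLip : ∀ t ∈ Set.Icc (0 : ℝ) T, ∀ x y : Vec d,
      ‖b t x - b t y‖ ≤ L * (1 + ‖x‖ ^ l + ‖y‖ ^ l) * ‖x - y‖)
    (p : ℝ) (hp : 2 ≤ p) (hpp₁ : p < p₁)
    (bn : ℝ → Vec d → Vec d) (σn : ℝ → Vec d → Mat d d₁) :
    ∃ C : ℝ, 0 < C ∧ ∀ t ∈ Set.Icc (0 : ℝ) T, ∀ x y z : Vec d,
      2 * ⟪x - y, b t x - bn t z⟫ + (p - 1) * ‖σ t x - σn t z‖ ^ 2 ≤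
        C * ‖x - y‖ ^ 2 + C * (1 + ‖y‖ ^ (2 * l) + ‖z‖ ^ (2 * l)) * ‖y - z‖ ^ 2 +
          ‖b t z - bn t z‖ ^ 2 + C * ‖σ t z - σn t z‖ ^ 2 := by
  have hp1 : 0 < p - 1 := by linarith
  have hp₁1 : 0 < p₁ - 1 := by linarith
  set δ : ℝ := (p₁ - p) / (p - 1) with hδdef
  have hδ : 0 < δ := div_pos (by linarith) hp1
  have hδinv : 0 < δ⁻¹ := inv_pos.mpr hδ
  have hKey : (p - 1) * (1 + δ) = p₁ - 1 := by
    rw [hδdef]; field_simp; ring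
  set K : ℝ := 2 * (p - 1) * (1 + δ⁻¹) with hKdef
  have hK : 0 < K := by positivity
  set K2 : ℝ := 9 * K * L / (p₁ - 1) with hK2def
  have hK2 : 0 < K2 := by positivity
  refine ⟨(L + 2) + 3 * L ^ 2 + K2 + K, by positivity, ?_⟩
  intro t ht x y z
  set C : ℝ := (L + 2) + 3 * L ^ 2 + K2 + K with hCdef
  set P : ℝ := 1 + ‖y‖ ^ (2 * l) + ‖z‖ ^ (2 * l) with hPdef
  set Q : ℝ := 1 + ‖y‖ ^ l + ‖z‖ ^ l with hQdef
  have hyl : (0:ℝ) ≤ ‖y‖ ^ l := Real.rpow_nonneg (norm_nonneg y) l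
  have hzl : (0:ℝ) ≤ ‖z‖ ^ l := Real.rpow_nonneg (norm_nonneg z) l
  have hy2l : (0:ℝ) ≤ ‖y‖ ^ (2 * l) := Real.rpow_nonneg (norm_nonneg y) _
  have hz2l : (0:ℝ) ≤ ‖z‖ ^ (2 * l) := Real.rpow_nonneg (norm_nonneg z) _
  have hysq : (‖y‖ ^ l) ^ 2 = ‖y‖ ^ (2 * l) := rpow_sq' (norm_nonneg y)
  have hzsq : (‖z‖ ^ l) ^ 2 = ‖z‖ ^ (2 * l) := rpow_sq' (norm_nonneg z)
  have hybd := rpow_le_one_add' (norm_nonneg y) hl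
  have hzbd := rpow_le_one_add' (norm_nonneg z) hl
  have hP1 : (1:ℝ) ≤ P := by rw [hPdef]; linarith
  have hQ1 : (1:ℝ) ≤ Q := by rw [hQdef]; linarith
  have hQ3P : Q ≤ 3 * P := by rw [hQdef, hPdef]; linarith
  have hQ2 : Q ^ 2 ≤ 3 * P := by
    have h := aux_sq3 (‖y‖ ^ l) (‖z‖ ^ l)
    rw [hysq, hzsq] at h
    rw [hQdef, hPdef]; linarith
  have hA := hMono t ht x y
  have hB := hMono t ht y z
  have hLyz := hLip t ht y z
  -- split the inner product
  have hsplit : ⟪x - y, b t x - bn t z⟫ = ⟪x - y, b t x - b t y⟫ +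
      ⟪x - y, b t y - b t z⟫ + ⟪x - y, b t z - bn t z⟫ := by
    rw [← inner_add_right, ← inner_add_right]
    congr 1
    abel
  have hub : ‖b t y - b t z‖ ≤ L * Q * ‖y - z‖ := hLyz
  -- bound on middle inner product
  have hI2 : 2 * ⟪x - y, b t y - b t z⟫ ≤ ‖x - y‖ ^ 2 + 3 * L ^ 2 * (P * ‖y - z‖ ^ 2) := by
    have cs := real_inner_le_norm (x - y) (b t y - b t z)
    have h1 : ⟪x - y, b t y - b t z⟫ ≤ ‖x - y‖ * (L * Q * ‖y - z‖) :=
      cs.trans (mul_le_mul_of_nonneg_left hub (norm_nonneg _))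
    have h2 := aux_two_mul h1
    have h3 : L ^ 2 * ‖y - z‖ ^ 2 * Q ^ 2 ≤ L ^ 2 * ‖y - z‖ ^ 2 * (3 * P) :=
      mul_le_mul_of_nonneg_left hQ2 (by positivity)
    have e : (L * Q * ‖y - z‖) ^ 2 = L ^ 2 * ‖y - z‖ ^ 2 * Q ^ 2 := by ring
    rw [e] at h2
    linarith [h2, h3]
  -- bound on last inner product
  have hI3 : 2 * ⟪x - y, b t z - bn t z⟫ ≤ ‖x - y‖ ^ 2 + ‖b t z - bn t z‖ ^ 2 :=
    aux_two_mul (real_inner_le_norm (x - y) (b t z - bn t z))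
  -- bound on ‖σ t y - σ t z‖²
  have hB2 : (p₁ - 1) * ‖σ t y - σ t z‖ ^ 2 ≤ 9 * L * (P * ‖y - z‖ ^ 2) := by
    have habs := abs_real_inner_le_norm (y - z) (b t y - b t z)
    have hlow : -(‖y - z‖ * ‖b t y - b t z‖) ≤ ⟪y - z, b t y - b t z⟫ := by
      have := neg_abs_le (⟪y - z, b t y - b t z⟫ : ℝ)
      linarith
    have h2 : ‖y - z‖ * ‖b t y - b t z‖ ≤ ‖y - z‖ * (L * Q * ‖y - z‖) :=
      mul_le_mul_of_nonneg_left hub (norm_nonneg _)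
    have e2 : ‖y - z‖ * (L * Q * ‖y - z‖) = L * Q * ‖y - z‖ ^ 2 := by ring
    rw [e2] at h2
    have hQP : (0:ℝ) ≤ L * ‖y - z‖ ^ 2 * (3 * P - Q) :=
      mul_nonneg (by positivity) (by linarith)
    have hLP : (0:ℝ) ≤ L * ‖y - z‖ ^ 2 * (3 * P - 1) :=
      mul_nonneg (by positivity) (by linarith)
    linarith [hB, hlow, h2, hQP, hLP]
  -- weighted triangle inequality for the diffusion part
  have hσsplit : σ t x - σn t z =
      (σ t x - σ t y) + ((σ t y - σ t z) + (σ t z - σn t z)) := by abel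
  have hY1 : ‖σ t x - σn t z‖ ^ 2 ≤ (1 + δ) * ‖σ t x - σ t y‖ ^ 2 +
      (1 + δ⁻¹) * ‖(σ t y - σ t z) + (σ t z - σn t z)‖ ^ 2 := by
    rw [hσsplit]; exact young_ineq _ _ δ hδ
  have hY2 : ‖(σ t y - σ t z) + (σ t z - σn t z)‖ ^ 2 ≤
      2 * ‖σ t y - σ t z‖ ^ 2 + 2 * ‖σ t z - σn t z‖ ^ 2 := by
    have h := young_ineq (σ t y - σ t z) (σ t z - σn t z) 1 one_pos
    rw [inv_one] at h
    linarith
  have hS : (p - 1) * ‖σ t x - σn t z‖ ^ 2 ≤ (p₁ - 1) * ‖σ t x - σ t y‖ ^ 2 +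
      K * ‖σ t y - σ t z‖ ^ 2 + K * ‖σ t z - σn t z‖ ^ 2 := by
    have h1 := mul_le_mul_of_nonneg_left hY1 hp1.le
    have e1 : (p - 1) * ((1 + δ) * ‖σ t x - σ t y‖ ^ 2 +
        (1 + δ⁻¹) * ‖(σ t y - σ t z) + (σ t z - σn t z)‖ ^ 2) =
        (p₁ - 1) * ‖σ t x - σ t y‖ ^ 2 +
        ((p - 1) * (1 + δ⁻¹)) * ‖(σ t y - σ t z) + (σ t z - σn t z)‖ ^ 2 := by
      rw [← hKey]; ring
    have h2 := mul_le_mul_of_nonneg_left hY2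
      (by positivity : (0:ℝ) ≤ (p - 1) * (1 + δ⁻¹))
    have e2 : ((p - 1) * (1 + δ⁻¹)) * (2 * ‖σ t y - σ t z‖ ^ 2 +
        2 * ‖σ t z - σn t z‖ ^ 2) = K * ‖σ t y - σ t z‖ ^ 2 +
        K * ‖σ t z - σn t z‖ ^ 2 := by
      rw [hKdef]; ring
    rw [e1] at h1
    rw [e2] at h2
    linarith [h1, h2]
  have hKbb : K * ‖σ t y - σ t z‖ ^ 2 ≤ K2 * (P * ‖y - z‖ ^ 2) := by
    have h := mul_le_mul_of_nonneg_left hB2 (le_of_lt (div_pos hK hp₁1))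
    have e1 : K / (p₁ - 1) * ((p₁ - 1) * ‖σ t y - σ t z‖ ^ 2) =
        K * ‖σ t y - σ t z‖ ^ 2 := by field_simp
    have e2 : K / (p₁ - 1) * (9 * L * (P * ‖y - z‖ ^ 2)) =
        K2 * (P * ‖y - z‖ ^ 2) := by rw [hK2def]; ring
    rw [e1, e2] at h
    exact h
  -- assemble
  have hPv : (0:ℝ) ≤ P * ‖y - z‖ ^ 2 := by positivity
  have hL2 : (0:ℝ) ≤ 3 * L ^ 2 := by positivity
  have hc1 : (L + 2) * ‖x - y‖ ^ 2 ≤ C * ‖x - y‖ ^ 2 :=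
    mul_le_mul_of_nonneg_right (by rw [hCdef]; linarith [hK, hK2, hL2]) (sq_nonneg _)
  have hc2 : (3 * L ^ 2 + K2) * (P * ‖y - z‖ ^ 2) ≤ C * (P * ‖y - z‖ ^ 2) :=
    mul_le_mul_of_nonneg_right (by rw [hCdef]; linarith) hPv
  have hc3 : K * ‖σ t z - σn t z‖ ^ 2 ≤ C * ‖σ t z - σn t z‖ ^ 2 :=
    mul_le_mul_of_nonneg_right (by rw [hCdef]; linarith [hL, hK2, hL2]) (sq_nonneg _)
  rw [hsplit]
  have hfin : C * (1 + ‖y‖ ^ (2 * l) + ‖z‖ ^ (2 * l)) * ‖y - z‖ ^ 2 =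
      C * (P * ‖y - z‖ ^ 2) := by rw [hPdef]; ring
  rw [hfin]
  linarith [hA, hI2, hI3, hS, hKbb, hc1, hc2, hc3]
end

section
/- Assume |ξ| > 0 and let p₀ be a real number with 1 ≤ p₀ ≤ (2λ + |ξ|²)/|ξ|². Then for every x ∈ ℝ^d, 2 x·b(x) + (p₀−1)|σ(x)|² ≤ 2λμ(1 + |x|²); i.e. the 3/2-model coefficients satisfy the coercivity condition (A-4) with constant K = 2λμ. -/
open scoped RealInnerProductSpace

/-- the 3/2-model coefficients `b(x) = λx(μ−|x|)`,
`σ(x) = |x|^{3/2} ξ` satisfy the coercivity condition (A-4) with `K = 2λμ`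
whenever `1 ≤ p₀ ≤ (2λ + |ξ|²)/|ξ|²`. -/
theorem stmt_14 (d d₁ : ℕ) (hd : 1 ≤ d) (hd₁ : 1 ≤ d₁)
    (lam mu : ℝ) (hlam : 0 < lam) (hmu : 0 < mu)
    (ξ : Mat d d₁) (hξ : 0 < ‖ξ‖)
    (b : Vec d → Vec d) (σ : Vec d → Mat d d₁)
    (hb : ∀ x : Vec d, b x = (lam * (mu - ‖x‖)) • x)
    (hσ : ∀ x : Vec d, σ x = (‖x‖ ^ ((3 : ℝ) / 2)) • ξ)
    (p₀ : ℝ) (hp₀ : 1 ≤ p₀) (hp₀' : p₀ ≤ (2 * lam + ‖ξ‖ ^ 2) / ‖ξ‖ ^ 2) :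
    ∀ x : Vec d,
      2 * ⟪x, b x⟫ + (p₀ - 1) * ‖σ x‖ ^ 2 ≤ 2 * lam * mu * (1 + ‖x‖ ^ 2) := by
  intro x
  have hx : (0:ℝ) ≤ ‖x‖ := norm_nonneg x
  have hinner : ⟪x, b x⟫ = lam * (mu - ‖x‖) * ‖x‖ ^ 2 := by
    rw [hb, real_inner_smul_right, real_inner_self_eq_norm_sq]
  have hnσ : ‖σ x‖ ^ 2 = ‖x‖ ^ 3 * ‖ξ‖ ^ 2 := by
    rw [hσ, norm_smul, mul_pow]
    congr 1
    rw [Real.norm_rpow_of_nonneg hx, Real.norm_eq_abs, abs_of_nonneg hx,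
      ← Real.rpow_natCast (‖x‖ ^ ((3:ℝ)/2)) 2, ← Real.rpow_mul hx]
    rw [show (3:ℝ)/2 * ((2:ℕ):ℝ) = ((3:ℕ):ℝ) by norm_num, Real.rpow_natCast]
  have hcoef : (p₀ - 1) * ‖ξ‖ ^ 2 ≤ 2 * lam := by
    have h2 : (0:ℝ) < ‖ξ‖ ^ 2 := by positivity
    have := (le_div_iff₀ h2).mp hp₀'
    nlinarith
  have hcube : (p₀ - 1) * ‖σ x‖ ^ 2 ≤ 2 * lam * ‖x‖ ^ 3 := by
    rw [hnσ]
    have h3 : (0:ℝ) ≤ ‖x‖ ^ 3 := by positivity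
    nlinarith
  rw [hinner]
  nlinarith [sq_nonneg (‖x‖), hx, mul_pos hlam hmu]
end

section
/- Assume |ξ| > 0 and let p₁ be a real number with 1 ≤ p₁ ≤ (λ + |ξ|²)/|ξ|². Then for all x, y ∈ ℝ^d, 2(x−y)·(b(x)−b(y)) + (p₁−1)|σ(x)−σ(y)|² ≤ 2λμ|x−y|²; i.e. the 3/2-model coefficients satisfy the monotonicity condition of (A-6) with constant L = 2λμ. -/
open scoped RealInnerProductSpace

lemma key_uv (u v : ℝ) (hu : 0 ≤ u) (hv : 0 ≤ v) :
    (u^3 - v^3)^2 ≤ 2*(u^2+v^2)*(u^2-v^2)^2 := by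
  nlinarith [sq_nonneg (u-v), sq_nonneg (u+v), sq_nonneg (u*v), mul_nonneg hu hv,
    sq_nonneg (u^2-v^2), sq_nonneg (u^2+v^2 - u*v), sq_nonneg (u^2+v^2+u*v),
    mul_nonneg (mul_nonneg hu hv) (sq_nonneg (u-v))]

lemma rpow32 (a : ℝ) (ha : 0 ≤ a) : a ^ ((3:ℝ)/2) = (Real.sqrt a)^3 := by
  rw [Real.sqrt_eq_rpow, ← Real.rpow_natCast (a ^ ((1:ℝ)/2)) 3, ← Real.rpow_mul ha]
  norm_num

lemma key_ab (a b : ℝ) (ha : 0 ≤ a) (hb : 0 ≤ b) :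
    (a ^ ((3:ℝ)/2) - b ^ ((3:ℝ)/2))^2 ≤ 2*(a+b)*(a-b)^2 := by
  rw [rpow32 a ha, rpow32 b hb]
  have hu := Real.sqrt_nonneg a
  have hv := Real.sqrt_nonneg b
  have h := key_uv (Real.sqrt a) (Real.sqrt b) hu hv
  rw [Real.sq_sqrt ha, Real.sq_sqrt hb] at h
  convert h using 2

/-- the 3/2-model coefficients `b(x) = λx(μ−|x|)`,
`σ(x) = |x|^{3/2} ξ` satisfy the monotonicity condition of (A-6) with `L = 2λμ`
whenever `1 ≤ p₁ ≤ (λ + |ξ|²)/|ξ|²`. -/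
theorem stmt_18 (d d₁ : ℕ) (hd : 1 ≤ d) (hd₁ : 1 ≤ d₁)
    (lam mu : ℝ) (hlam : 0 < lam) (hmu : 0 < mu)
    (ξ : Mat d d₁) (hξ : 0 < ‖ξ‖)
    (b : Vec d → Vec d) (σ : Vec d → Mat d d₁)
    (hb : ∀ x : Vec d, b x = (lam * (mu - ‖x‖)) • x)
    (hσ : ∀ x : Vec d, σ x = (‖x‖ ^ ((3 : ℝ) / 2)) • ξ)
    (p₁ : ℝ) (hp₁ : 1 ≤ p₁) (hp₁' : p₁ ≤ (lam + ‖ξ‖ ^ 2) / ‖ξ‖ ^ 2) :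
    ∀ x y : Vec d,
      2 * ⟪x - y, b x - b y⟫ + (p₁ - 1) * ‖σ x - σ y‖ ^ 2 ≤
        2 * lam * mu * ‖x - y‖ ^ 2 := by
  intro x y
  have hξ2 : (0:ℝ) < ‖ξ‖ ^ 2 := by positivity
  have hc : (p₁ - 1) * ‖ξ‖ ^ 2 ≤ lam := by
    rw [le_div_iff₀ hξ2] at hp₁'
    nlinarith
  have hc0 : 0 ≤ (p₁ - 1) * ‖ξ‖ ^ 2 := by
    apply mul_nonneg (by linarith) (le_of_lt hξ2)
  set a := ‖x‖ with ha
  set B := ‖y‖ with hB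
  have ha0 : 0 ≤ a := norm_nonneg x
  have hB0 : 0 ≤ B := norm_nonneg y
  set D := a ^ ((3:ℝ)/2) - B ^ ((3:ℝ)/2) with hD
  -- norm of σ difference
  have hσn : ‖σ x - σ y‖ ^ 2 = D ^ 2 * ‖ξ‖ ^ 2 := by
    rw [hσ x, hσ y, ← sub_smul, norm_smul]
    rw [mul_pow, Real.norm_eq_abs, sq_abs]
  -- inner product expansion
  have hinner : ⟪x - y, b x - b y⟫ =
      lam * mu * ‖x - y‖ ^ 2 - lam * (a^3 + B^3 - (a + B) * ⟪x, y⟫) := by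
    rw [hb x, hb y]
    have hns : ‖x - y‖ ^ 2 = a^2 - 2 * ⟪x, y⟫ + B^2 := by
      rw [@norm_sub_sq_real]
    simp only [inner_sub_left, inner_sub_right, inner_smul_right,
      real_inner_self_eq_norm_sq, real_inner_comm y x]
    rw [hns, real_inner_comm y x]; ring
  have hkey := key_ab a B ha0 hB0
  have hxy : ⟪x, y⟫ ≤ a * B := real_inner_le_norm x y
  rw [hinner, hσn]
  have hD2 : D^2 ≤ 2*(a+B)*(a-B)^2 := hkey
  nlinarith [mul_le_mul_of_nonneg_left hxy (by positivity : (0:ℝ) ≤ lam * (a + B)),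
    mul_le_mul hc hD2 (sq_nonneg D) hlam.le,
    mul_nonneg hc0 (sq_nonneg D)]
end
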